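/- Assume (H1) and (H2). (i) Every ergodic σ-invariant Borel probability measure ν on Σ satisfies ν([0]) · log f₀'(1) + ν([1]) · log f₁'(1) ≤ 0, where [0] = {ξ ∈ Σ₂ : ξ₀ = 0} and [1] = {ξ ∈ Σ₂ : ξ₀ = 1}. (ii) Consequently, if f₁'(1) > 1 and C = |log f₀'(1)| / log f₁'(1), then every σ-invariant Borel probability measure ν on Σ satisfies ν([1]) ≤ C · ν([0]), and the topological entropy of σ on Σ satisfies h_top(σ, Σ) ≤ 𝓗(p), where p = min{1/2, C/(1+C)} and 𝓗(p) = −p log p − (1−p) log(1−p). -/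

import Mathlib

open Set MeasureTheory Filter

namespace DGR

/-- The two-sided sequence space `Σ₂ = {0,1}^ℤ`. -/
abbrev Seq2 := ℤ → Fin 2

/-- The left shift map `σ`. -/
def shift (ξ : Seq2) : Seq2 := fun n => ξ (n + 1)

/-- The constant sequence `0^ℤ`. -/
def zeroSeq : Seq2 := fun _ => 0

/-- The skew-product `F̃(ξ,x) = (σ ξ, f̃_{ξ₀} x)`. -/
def F (f0 f1 : ℝ → ℝ) (p : Seq2 × ℝ) : Seq2 × ℝ :=
  (shift p.1, if p.1 0 = 0 then f0 p.2 else f1 p.2)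

/-- The fixed point `P = (0^ℤ, 1)`. -/
def Pfix : Seq2 × ℝ := (zeroSeq, 1)

/-- The fixed point `Q = (0^ℤ, 0)`. -/
def Qfix : Seq2 × ℝ := (zeroSeq, 0)

/-- `f_ξ^n = f_{ξ_{n-1}} ∘ ⋯ ∘ f_{ξ₀}`. -/
def fIter (f0 f1 : ℝ → ℝ) (ξ : Seq2) : ℕ → ℝ → ℝ
  | 0, x => x
  | n + 1, x => (if ξ (n : ℤ) = 0 then f0 else f1) (fIter f0 f1 ξ n x)

/-- The derivative `(f_ξ^n)'(x)` (chain rule product). -/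
def fIterDeriv (f0 f1 df0 df1 : ℝ → ℝ) (ξ : Seq2) : ℕ → ℝ → ℝ
  | 0, _ => 1
  | n + 1, x => fIterDeriv f0 f1 df0 df1 ξ n x *
      (if ξ (n : ℤ) = 0 then df0 else df1) (fIter f0 f1 ξ n x)

/-- `ξ⁺` is admissible for `x`: all forward iterates are defined and stay in `[0,1]`. -/
def forwardAdmissible (f0 f1 : ℝ → ℝ) (d : ℝ) (ξ : Seq2) (x : ℝ) : Prop :=
  ∀ n : ℕ, fIter f0 f1 ξ n x ∈ Icc (0 : ℝ) 1 ∧ (ξ (n : ℤ) = 1 → d ≤ fIter f0 f1 ξ n x)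

/-- `ξ⁻` is admissible for `x`: there is a backward orbit through `x` staying in `[0,1]`. -/
def backwardAdmissible (f0 f1 : ℝ → ℝ) (d : ℝ) (ξ : Seq2) (x : ℝ) : Prop :=
  ∃ y : ℕ → ℝ, y 0 = x ∧ ∀ m : ℕ,
    y m ∈ Icc (0 : ℝ) 1 ∧
    (ξ (-(m : ℤ) - 1) = 0 → f0 (y (m + 1)) = y m) ∧
    (ξ (-(m : ℤ) - 1) = 1 → d ≤ y (m + 1) ∧ f1 (y (m + 1)) = y m)

/-- The maximal invariant set `Γ` of `F̃` in `Σ₂ × [0,1]`. -/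
def Gamma (f0 f1 : ℝ → ℝ) (d : ℝ) : Set (Seq2 × ℝ) :=
  { p | forwardAdmissible f0 f1 d p.1 p.2 ∧ backwardAdmissible f0 f1 d p.1 p.2 }

/-- The subshift `Σ = π(Γ)` of admissible sequences. -/
def SigmaA (f0 f1 : ℝ → ℝ) (d : ℝ) : Set Seq2 := Prod.fst '' Gamma f0 f1 d

/-- `I_{ξ⁺}`. -/
def Iplus (f0 f1 : ℝ → ℝ) (d : ℝ) (ξ : Seq2) : Set ℝ := { x | forwardAdmissible f0 f1 d ξ x }

/-- `I_{ξ⁻}`. -/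
def Iminus (f0 f1 : ℝ → ℝ) (d : ℝ) (ξ : Seq2) : Set ℝ := { x | backwardAdmissible f0 f1 d ξ x }

/-- `I_ξ = I_{ξ⁺} ∩ I_{ξ⁻}`, the spine over `ξ`. -/
def Ifiber (f0 f1 : ℝ → ℝ) (d : ℝ) (ξ : Seq2) : Set ℝ := Iplus f0 f1 d ξ ∩ Iminus f0 f1 d ξ

/-- `x_{ξ⁺}`, the left endpoint of `I_{ξ⁺} = [x_{ξ⁺}, 1]`. -/
noncomputable def xPlus (f0 f1 : ℝ → ℝ) (d : ℝ) (ξ : Seq2) : ℝ := sInf (Iplus f0 f1 d ξ)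

/-- `x_{ξ⁻}`, the right endpoint of `I_{ξ⁻} = [0, x_{ξ⁻}]`. -/
noncomputable def xMinus (f0 f1 : ℝ → ℝ) (d : ℝ) (ξ : Seq2) : ℝ := sSup (Iminus f0 f1 d ξ)

/-- Hypothesis (H1), stated for strictly increasing differentiable extensions
`f0, f1 : ℝ → ℝ` with derivative functions `df0, df1`, whose restrictions to
`[0,1]` resp. `[d,1]` are the fiber maps. -/
structure H1 (f0 f1 df0 df1 : ℝ → ℝ) (d : ℝ) : Prop where
  d_mem : d ∈ Ioo (0 : ℝ) 1
  mono0 : StrictMono f0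
  mono1 : StrictMono f1
  hasDeriv0 : ∀ x, HasDerivAt f0 (df0 x) x
  hasDeriv1 : ∀ x, HasDerivAt f1 (df1 x) x
  contDeriv0 : ContinuousOn df0 (Icc 0 1)
  contDeriv1 : ContinuousOn df1 (Icc d 1)
  maps0 : MapsTo f0 (Icc 0 1) (Icc 0 1)
  surj0 : SurjOn f0 (Icc 0 1) (Icc 0 1)
  maps1 : MapsTo f1 (Icc d 1) (Icc 0 1)
  deriv0_zero : 1 < df0 0
  deriv0_one : df0 1 ∈ Ioo (0 : ℝ) 1
  f0_above : ∀ x ∈ Ioo (0 : ℝ) 1, x < f0 x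
  f1_d : f1 d = 0
  f1_below : ∀ x ∈ Icc d 1, f1 x < x
  deriv1_one : 0 < df1 1

/-- Hypothesis (H2): `f₀'` strictly decreasing, `f₁'` nonincreasing. -/
def H2 (df0 df1 : ℝ → ℝ) (d : ℝ) : Prop :=
  StrictAntiOn df0 (Icc 0 1) ∧ AntitoneOn df1 (Icc d 1)

/-- Hypothesis (H2+) with constant `M`. -/
def H2plus (df0 df1 : ℝ → ℝ) (d M : ℝ) : Prop :=
  1 < M ∧
  (∀ x ∈ Icc (0 : ℝ) 1, ∀ y ∈ Icc (0 : ℝ) 1, x < y →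
    M⁻¹ * (y - x) ≤ Real.log (df0 x) - Real.log (df0 y) ∧
      Real.log (df0 x) - Real.log (df0 y) ≤ M * (y - x)) ∧
  (∀ x ∈ Icc d 1, ∀ y ∈ Icc d 1, x < y →
    M⁻¹ * (y - x) ≤ Real.log (df1 x) - Real.log (df1 y) ∧
      Real.log (df1 x) - Real.log (df1 y) ≤ M * (y - x))

/-- The fiber Lyapunov exponent `χ(μ) = ∫ log f'_{ξ₀}(x) dμ(ξ,x)`. -/
noncomputable def lyap (df0 df1 : ℝ → ℝ) (μ : Measure (Seq2 × ℝ)) : ℝ :=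
  ∫ p, Real.log ((if p.1 0 = 0 then df0 else df1) p.2) ∂μ

/-- An `F`-invariant Borel probability measure on `Γ`. -/
def IsInvGamma (f0 f1 : ℝ → ℝ) (d : ℝ) (μ : Measure (Seq2 × ℝ)) : Prop :=
  IsProbabilityMeasure μ ∧ μ (Gamma f0 f1 d) = 1 ∧ μ.map (F f0 f1) = μ

/-- An ergodic `F`-invariant Borel probability measure on `Γ`. -/
def IsErgGamma (f0 f1 : ℝ → ℝ) (d : ℝ) (μ : Measure (Seq2 × ℝ)) : Prop :=
  IsInvGamma f0 f1 d μ ∧ Ergodic (F f0 f1) μ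

/-- A `σ`-invariant Borel probability measure on `Σ`. -/
def IsInvSigma (f0 f1 : ℝ → ℝ) (d : ℝ) (ν : Measure Seq2) : Prop :=
  IsProbabilityMeasure ν ∧ ν (SigmaA f0 f1 d) = 1 ∧ ν.map shift = ν

/-- An ergodic `σ`-invariant Borel probability measure on `Σ`. -/
def IsErgSigma (f0 f1 : ℝ → ℝ) (d : ℝ) (ν : Measure Seq2) : Prop :=
  IsInvSigma f0 f1 d ν ∧ Ergodic shift ν

/-- `f_{[w]} = f_{w_{n-1}} ∘ ⋯ ∘ f_{w_0}` for a finite word `w`. -/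
def fWord (f0 f1 : ℝ → ℝ) : List (Fin 2) → ℝ → ℝ
  | [], x => x
  | i :: w, x => fWord f0 f1 w ((if i = 0 then f0 else f1) x)

/-- The derivative `(f_{[w]})'(x)`. -/
def fWordDeriv (f0 f1 df0 df1 : ℝ → ℝ) : List (Fin 2) → ℝ → ℝ
  | [], _ => 1
  | i :: w, x => (if i = 0 then df0 x else df1 x) *
      fWordDeriv f0 f1 df0 df1 w ((if i = 0 then f0 else f1) x)

/-- The word `w` is (forward) admissible at `x`. -/
def wordAdm (f0 f1 : ℝ → ℝ) (d : ℝ) : List (Fin 2) → ℝ → Prop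
  | [], x => x ∈ Icc (0 : ℝ) 1
  | i :: w, x => x ∈ Icc (0 : ℝ) 1 ∧ (i = 1 → d ≤ x) ∧
      wordAdm f0 f1 d w ((if i = 0 then f0 else f1) x)

/-- The admissibility interval `I_{[w]}`. -/
def IWord (f0 f1 : ℝ → ℝ) (d : ℝ) (w : List (Fin 2)) : Set ℝ := { x | wordAdm f0 f1 d w x }

/-- The point `a_{[w]}`, left endpoint of `I_{[w]} = [a_{[w]}, 1]`. -/
noncomputable def aWord (f0 f1 : ℝ → ℝ) (d : ℝ) (w : List (Fin 2)) : ℝ := sInf (IWord f0 f1 d w)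

/-- The periodic sequence `w^ℤ`. -/
def perSeq (w : List (Fin 2)) : Seq2 := fun n => w.getD (n % (w.length : ℤ)).toNat 0

/-- The finite word `(ξ_a, ξ_{a+1}, …, ξ_{a+n-1})` read off a sequence. -/
def seqWord (ξ : Seq2) (a : ℤ) (n : ℕ) : List (Fin 2) := List.ofFn fun i : Fin n => ξ (a + (i.1 : ℤ))

/-- `X` is a periodic point of `F` in `Γ` with period `n ≥ 1`. -/
def IsPerPt (f0 f1 : ℝ → ℝ) (d : ℝ) (X : Seq2 × ℝ) (n : ℕ) : Prop :=
  X ∈ Gamma f0 f1 d ∧ 1 ≤ n ∧ (F f0 f1)^[n] X = X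

/-- Hyperbolic periodic point (the multiplier is different from 1). -/
def IsHypPerPt (f0 f1 df0 df1 : ℝ → ℝ) (d : ℝ) (X : Seq2 × ℝ) : Prop :=
  ∃ n, IsPerPt f0 f1 d X n ∧ fIterDeriv f0 f1 df0 df1 X.1 n X.2 ≠ 1

/-- Hyperbolic periodic point of expanding type. -/
def IsExpPerPt (f0 f1 df0 df1 : ℝ → ℝ) (d : ℝ) (X : Seq2 × ℝ) : Prop :=
  ∃ n, IsPerPt f0 f1 d X n ∧ 1 < fIterDeriv f0 f1 df0 df1 X.1 n X.2

/-- Hyperbolic periodic point of contracting type. -/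
def IsConPerPt (f0 f1 df0 df1 : ℝ → ℝ) (d : ℝ) (X : Seq2 × ℝ) : Prop :=
  ∃ n, IsPerPt f0 f1 d X n ∧ 0 < fIterDeriv f0 f1 df0 df1 X.1 n X.2 ∧
    fIterDeriv f0 f1 df0 df1 X.1 n X.2 < 1

/-- Parabolic periodic point (multiplier 1). -/
def IsParPerPt (f0 f1 df0 df1 : ℝ → ℝ) (d : ℝ) (X : Seq2 × ℝ) : Prop :=
  ∃ n, IsPerPt f0 f1 d X n ∧ fIterDeriv f0 f1 df0 df1 X.1 n X.2 = 1

/-- The stable set `W^s(R, F)` of a point, for `F : Γ → Γ`. -/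
def Ws (f0 f1 : ℝ → ℝ) (d : ℝ) (R : Seq2 × ℝ) : Set (Seq2 × ℝ) :=
  { X | (∀ k : ℕ, (F f0 f1)^[k] X ∈ Gamma f0 f1 d) ∧
      Tendsto (fun k => (F f0 f1)^[k] X) atTop (nhds R) }

/-- The unstable set `W^u(R, F) = W^s(R, F⁻¹)` of a point, for `F : Γ → Γ`. -/
def Wu (f0 f1 : ℝ → ℝ) (d : ℝ) (R : Seq2 × ℝ) : Set (Seq2 × ℝ) :=
  { X | ∃ Z : ℕ → Seq2 × ℝ, Z 0 = X ∧
      (∀ m : ℕ, Z m ∈ Gamma f0 f1 d ∧ F f0 f1 (Z (m + 1)) = Z m) ∧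
      Tendsto Z atTop (nhds R) }

/-- The stable set of the orbit of `R`. -/
def WsOrbit (f0 f1 : ℝ → ℝ) (d : ℝ) (R : Seq2 × ℝ) : Set (Seq2 × ℝ) :=
  ⋃ j : ℕ, Ws f0 f1 d ((F f0 f1)^[j] R)

/-- The unstable set of the orbit of `R`. -/
def WuOrbit (f0 f1 : ℝ → ℝ) (d : ℝ) (R : Seq2 × ℝ) : Set (Seq2 × ℝ) :=
  ⋃ j : ℕ, Wu f0 f1 d ((F f0 f1)^[j] R)

/-- The homoclinic class `H(R,F)`. -/
def homClass (f0 f1 : ℝ → ℝ) (d : ℝ) (R : Seq2 × ℝ) : Set (Seq2 × ℝ) :=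
  closure (WsOrbit f0 f1 d R ∩ WuOrbit f0 f1 d R)

/-- `R₁` and `R₂` are homoclinically related. -/
def HomRel (f0 f1 : ℝ → ℝ) (d : ℝ) (R₁ R₂ : Seq2 × ℝ) : Prop :=
  (WsOrbit f0 f1 d R₁ ∩ WuOrbit f0 f1 d R₂).Nonempty ∧
  (WuOrbit f0 f1 d R₁ ∩ WsOrbit f0 f1 d R₂).Nonempty

/-- A set is (fiber) hyperbolic of expanding type. -/
def IsHypExpanding (f0 f1 df0 df1 : ℝ → ℝ) (Λ : Set (Seq2 × ℝ)) : Prop :=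
  ∃ C : ℝ, 0 < C ∧ ∃ α : ℝ, 0 < α ∧ ∀ p ∈ Λ, ∀ n : ℕ, 1 ≤ n →
    C * Real.exp (α * n) ≤ fIterDeriv f0 f1 df0 df1 p.1 n p.2

/-- A set is (fiber) hyperbolic of contracting type (backward iterates expand). -/
def IsHypContracting (f0 f1 df0 df1 : ℝ → ℝ) (d : ℝ) (Λ : Set (Seq2 × ℝ)) : Prop :=
  ∃ C : ℝ, 0 < C ∧ ∃ α : ℝ, 0 < α ∧ ∀ p ∈ Λ, ∀ Z : ℕ → Seq2 × ℝ, Z 0 = p →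
    (∀ m : ℕ, Z m ∈ Gamma f0 f1 d ∧ F f0 f1 (Z (m + 1)) = Z m) →
    ∀ n : ℕ, 1 ≤ n → fIterDeriv f0 f1 df0 df1 (Z n).1 n (Z n).2 ≤ C * Real.exp (-(α * n))

/-- The nonwandering set `Ω(Γ, F)` of `F : Γ → Γ`. -/
def nonwandering (f0 f1 : ℝ → ℝ) (d : ℝ) : Set (Seq2 × ℝ) :=
  { X | X ∈ Gamma f0 f1 d ∧ ∀ U : Set (Seq2 × ℝ), IsOpen U → X ∈ U →
      ∃ n : ℕ, 1 ≤ n ∧ ∃ Y ∈ U ∩ Gamma f0 f1 d, (F f0 f1)^[n] Y ∈ U ∩ Gamma f0 f1 d }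

/-- The finite word `w` occurs in the sequence `ξ`. -/
def OccursIn (w : List (Fin 2)) (ξ : Seq2) : Prop :=
  ∃ k : ℤ, ∀ i : ℕ, i < w.length → ξ (k + (i : ℤ)) = w.getD i 0

/-- The set `Σ^het` of heteroclinic admissible sequences. -/
def SigmaHet (f0 f1 : ℝ → ℝ) (d : ℝ) : Set Seq2 :=
  { ξ | ξ ∈ SigmaA f0 f1 d ∧ ∃ k : ℤ, ∃ w : List (Fin 2),
      (∀ m : ℤ, m < k → ξ m = 0) ∧
      (∀ i : ℕ, i < w.length → ξ (k + (i : ℤ)) = w.getD i 0) ∧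
      (∀ m : ℤ, k + (w.length : ℤ) ≤ m → ξ m = 0) ∧
      fWord f0 f1 w 1 = 0 }

/-- `Σ^cod = Σ ∖ Σ^het`. -/
def SigmaCod (f0 f1 : ℝ → ℝ) (d : ℝ) : Set Seq2 := SigmaA f0 f1 d \ SigmaHet f0 f1 d

/-- `Γ^cod = π⁻¹(Σ^cod) ∩ Γ`. -/
def GammaCod (f0 f1 : ℝ → ℝ) (d : ℝ) : Set (Seq2 × ℝ) :=
  { p ∈ Gamma f0 f1 d | p.1 ∈ SigmaCod f0 f1 d }

/-- `Σ^sing`: sequences whose spine is a singleton. -/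
def SigmaSing (f0 f1 : ℝ → ℝ) (d : ℝ) : Set Seq2 :=
  { ξ | ξ ∈ SigmaA f0 f1 d ∧ (Ifiber f0 f1 d ξ).Subsingleton }

/-- `Σ^spine`: sequences whose spine is a nondegenerate interval. -/
def SigmaSpine (f0 f1 : ℝ → ℝ) (d : ℝ) : Set Seq2 :=
  { ξ | ξ ∈ SigmaA f0 f1 d ∧ ¬ (Ifiber f0 f1 d ξ).Subsingleton }

/-- `T` restricted to `S` is topologically transitive. -/
def TransOn {α : Type*} [TopologicalSpace α] (T : α → α) (S : Set α) : Prop :=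
  ∀ U V : Set α, IsOpen U → IsOpen V → (U ∩ S).Nonempty → (V ∩ S).Nonempty →
    ∃ n : ℕ, 1 ≤ n ∧ (T^[n] '' (U ∩ S) ∩ (V ∩ S)).Nonempty

/-- `T` restricted to `S` is topologically mixing. -/
def MixOn {α : Type*} [TopologicalSpace α] (T : α → α) (S : Set α) : Prop :=
  ∀ U V : Set α, IsOpen U → IsOpen V → (U ∩ S).Nonempty → (V ∩ S).Nonempty →
    ∃ N : ℕ, ∀ n : ℕ, N ≤ n → (T^[n] '' (U ∩ S) ∩ (V ∩ S)).Nonempty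

/-- A subshift of finite type: the sequences avoiding a finite list of forbidden words. -/
def IsSFT (S : Set Seq2) : Prop :=
  ∃ Fw : Finset (List (Fin 2)), S = { ξ | ∀ w ∈ Fw, ¬ OccursIn w ξ }

/-- Number of words of length `n` appearing in sequences of `S`. -/
noncomputable def wordCount (S : Set Seq2) (n : ℕ) : ℕ :=
  Nat.card { w : List (Fin 2) // w.length = n ∧ ∃ ξ ∈ S, OccursIn w ξ }

/-- Topological entropy of the shift on a subshift `S`, as exponential growth rate of
the number of words. -/
noncomputable def subshiftEntropy (S : Set Seq2) : ℝ :=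
  Filter.limsup (fun n : ℕ => Real.log (wordCount S n) / n) Filter.atTop

/-- `Λ` is `F`-invariant. -/
def IsInvariantSet (f0 f1 : ℝ → ℝ) (Λ : Set (Seq2 × ℝ)) : Prop := F f0 f1 '' Λ = Λ

/-- `Λ` is locally maximal: it is the set of full orbits inside some neighborhood. -/
def IsLocallyMaximal (f0 f1 : ℝ → ℝ) (Λ : Set (Seq2 × ℝ)) : Prop :=
  ∃ V : Set (Seq2 × ℝ), IsOpen V ∧ Λ ⊆ V ∧
    Λ = { X | ∃ Z : ℤ → Seq2 × ℝ, Z 0 = X ∧ (∀ n : ℤ, Z (n + 1) = F f0 f1 (Z n)) ∧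
      ∀ n : ℤ, Z n ∈ V }

/-- Basic set with uniform fiber expansion. -/
def IsBasicExp (f0 f1 df0 df1 : ℝ → ℝ) (d : ℝ) (Λ : Set (Seq2 × ℝ)) : Prop :=
  Λ ⊆ Gamma f0 f1 d ∧ IsCompact Λ ∧ IsInvariantSet f0 f1 Λ ∧ IsLocallyMaximal f0 f1 Λ ∧
  TransOn (F f0 f1) Λ ∧ IsHypExpanding f0 f1 df0 df1 Λ

/-- Basic set with uniform fiber contraction. -/
def IsBasicCon (f0 f1 df0 df1 : ℝ → ℝ) (d : ℝ) (Λ : Set (Seq2 × ℝ)) : Prop :=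
  Λ ⊆ Gamma f0 f1 d ∧ IsCompact Λ ∧ IsInvariantSet f0 f1 Λ ∧ IsLocallyMaximal f0 f1 Λ ∧
  TransOn (F f0 f1) Λ ∧ IsHypContracting f0 f1 df0 df1 d Λ

/-- The entropy function `𝓗(p) = -p log p - (1-p) log (1-p)`. -/
noncomputable def entH (p : ℝ) : ℝ := -(p * Real.log p) - (1 - p) * Real.log (1 - p)


/-! ## Auxiliary development -/

section Aux

variable {f0 f1 df0 df1 : ℝ → ℝ} {d : ℝ}

private lemma fin2 : ∀ i : Fin 2, i = 0 ∨ i = 1 := by decide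

private lemma H1.f0_one (h : H1 f0 f1 df0 df1 d) : f0 1 = 1 := by
  obtain ⟨x, hx, hfx⟩ := h.surj0 (Set.right_mem_Icc.mpr zero_le_one)
  have h1 : f0 x ≤ f0 1 := h.mono0.monotone hx.2
  have h2 : f0 1 ≤ 1 := (h.maps0 (Set.right_mem_Icc.mpr zero_le_one)).2
  rw [hfx] at h1
  linarith

private lemma step0 (h1 : H1 f0 f1 df0 df1 d) (h2 : H2 df0 df1 d) {x : ℝ}
    (hx : x ∈ Icc (0 : ℝ) 1) : df0 1 * (1 - x) ≤ 1 - f0 x := by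
  rcases eq_or_lt_of_le hx.2 with he | hlt
  · rw [he, h1.f0_one]; simp
  · obtain ⟨c, hc, hceq⟩ := exists_hasDerivAt_eq_slope f0 df0 hlt
      (fun y _ => (h1.hasDeriv0 y).continuousAt.continuousWithinAt)
      (fun y _ => h1.hasDeriv0 y)
    have hd : df0 1 < df0 c :=
      h2.1 ⟨le_trans hx.1 hc.1.le, hc.2.le⟩ (Set.right_mem_Icc.mpr zero_le_one) hc.2
    have hx1 : 0 < 1 - x := by linarith
    have hmul : df0 c * (1 - x) = f0 1 - f0 x := by
      rw [hceq]; field_simp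
    rw [h1.f0_one] at hmul
    nlinarith

private lemma step1 (h1 : H1 f0 f1 df0 df1 d) (h2 : H2 df0 df1 d) {x : ℝ}
    (hx : x ∈ Icc d 1) : df1 1 * (1 - x) ≤ 1 - f1 x := by
  have h1mem : (1 : ℝ) ∈ Icc d 1 := Set.right_mem_Icc.mpr h1.d_mem.2.le
  have hf11 : f1 1 ≤ 1 := (h1.maps1 h1mem).2
  rcases eq_or_lt_of_le hx.2 with he | hlt
  · rw [he]; simp; linarith
  · obtain ⟨c, hc, hceq⟩ := exists_hasDerivAt_eq_slope f1 df1 hlt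
      (fun y _ => (h1.hasDeriv1 y).continuousAt.continuousWithinAt)
      (fun y _ => h1.hasDeriv1 y)
    have hd : df1 1 ≤ df1 c :=
      h2.2 ⟨le_trans hx.1 hc.1.le, hc.2.le⟩ h1mem hc.2.le
    have hx1 : 0 < 1 - x := by linarith
    have hmul : df1 c * (1 - x) = f1 1 - f1 x := by
      rw [hceq]; field_simp
    nlinarith

private lemma exists_orbit {ξ : Seq2} {x : ℝ} (hp : (ξ, x) ∈ Gamma f0 f1 d) :
    ∃ z : ℤ → ℝ, ∀ n : ℤ, z n ∈ Icc (0 : ℝ) 1 ∧ (ξ n = 1 → d ≤ z n) ∧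
      z (n + 1) = (if ξ n = 0 then f0 else f1) (z n) := by
  obtain ⟨hfw, y, hy0, hy⟩ := hp
  refine ⟨fun n => if 0 ≤ n then fIter f0 f1 ξ n.toNat x else y (-n).toNat, fun n => ?_⟩
  dsimp only
  rcases le_or_gt 0 n with hn | hn
  · have hc : ((n.toNat : ℤ)) = n := Int.toNat_of_nonneg hn
    rw [if_pos hn, if_pos (by omega : (0:ℤ) ≤ n + 1)]
    have h2 : (n + 1).toNat = n.toNat + 1 := by omega
    refine ⟨(hfw n.toNat).1, ?_, ?_⟩
    · intro h; exact (hfw n.toNat).2 (by rw [hc]; exact h)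
    · rw [h2]
      have : fIter f0 f1 ξ (n.toNat + 1) x
          = (if ξ ((n.toNat : ℕ) : ℤ) = 0 then f0 else f1) (fIter f0 f1 ξ n.toNat x) := rfl
      rw [this, hc]
  · set m : ℕ := (-(n + 1)).toNat with hm
    have hmn : n = -(m : ℤ) - 1 := by omega
    rw [if_neg (by omega : ¬ (0:ℤ) ≤ n)]
    have h1 : (-n).toNat = m + 1 := by omega
    rw [h1]
    have h2 : (if 0 ≤ n + 1 then fIter f0 f1 ξ (n + 1).toNat x else y (-(n + 1)).toNat) = y m := by
      by_cases h : (0:ℤ) ≤ n + 1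
      · have hn1 : n = -1 := by omega
        have hm0 : m = 0 := by omega
        rw [if_pos h]
        have h3 : (n + 1).toNat = 0 := by omega
        rw [h3, hm0]
        exact hy0.symm
      · rw [if_neg h]
    rw [h2]
    refine ⟨(hy (m + 1)).1, ?_, ?_⟩
    · intro h
      rw [hmn] at h
      exact ((hy m).2.2 h).1
    · rcases fin2 (ξ n) with h | h
      · rw [h, if_pos rfl]
        rw [hmn] at h
        exact ((hy m).2.1 h).symm
      · have hne : ξ n ≠ 0 := by rw [h]; decide
        rw [if_neg hne]
        rw [hmn] at h
        exact ((hy m).2.2 h).2.symm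

private lemma orbit_prod (h1 : H1 f0 f1 df0 df1 d) (h2 : H2 df0 df1 d) {ξ : Seq2} {z : ℤ → ℝ}
    (hz : ∀ n : ℤ, z n ∈ Icc (0 : ℝ) 1 ∧ (ξ n = 1 → d ≤ z n) ∧
      z (n + 1) = (if ξ n = 0 then f0 else f1) (z n))
    (k : ℤ) (n : ℕ) :
    (1 - z k) * ∏ i ∈ Finset.range n, (if ξ (k + (i : ℤ)) = 0 then df0 1 else df1 1)
      ≤ 1 - z (k + (n : ℤ)) := by
  induction n with
  | zero => simp
  | succ n ih =>
    have hcast : k + ((n + 1 : ℕ) : ℤ) = (k + (n : ℤ)) + 1 := by push_cast; ring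
    rw [Finset.prod_range_succ, hcast, (hz (k + (n : ℤ))).2.2, ← mul_assoc]
    rcases fin2 (ξ (k + (n : ℤ))) with h | h
    · rw [h, if_pos rfl, if_pos rfl]
      have hs := step0 h1 h2 (hz (k + (n : ℤ))).1
      have hd0 : (0 : ℝ) < df0 1 := h1.deriv0_one.1
      have := mul_le_mul_of_nonneg_right ih hd0.le
      linarith
    · have hne : ξ (k + (n : ℤ)) ≠ 0 := by rw [h]; decide
      rw [if_neg hne, if_neg hne]
      have hmem : z (k + (n : ℤ)) ∈ Icc d 1 := ⟨(hz _).2.1 h, (hz _).1.2⟩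
      have hs := step1 h1 h2 hmem
      have hd1 : (0 : ℝ) < df1 1 := h1.deriv1_one
      have := mul_le_mul_of_nonneg_right ih hd1.le
      linarith

private lemma prod_le (h1 : H1 f0 f1 df0 df1 d) (h2 : H2 df0 df1 d) {ξ : Seq2} {z : ℤ → ℝ}
    (hz : ∀ n : ℤ, z n ∈ Icc (0 : ℝ) 1 ∧ (ξ n = 1 → d ≤ z n) ∧
      z (n + 1) = (if ξ n = 0 then f0 else f1) (z n)) :
    ∀ (n : ℕ) (k : ℤ), (∏ i ∈ Finset.range n, (if ξ (k + (i : ℤ)) = 0 then df0 1 else df1 1))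
      ≤ max 1 (df1 1 / (1 - f1 1)) := by
  have hu : 0 < 1 - f1 1 := by
    have := h1.f1_below 1 (Set.right_mem_Icc.mpr h1.d_mem.2.le)
    linarith
  have hl0 : (0 : ℝ) < df0 1 := h1.deriv0_one.1
  have hl1 : (0 : ℝ) < df1 1 := h1.deriv1_one
  have hmax1 : (1 : ℝ) ≤ max 1 (df1 1 / (1 - f1 1)) := le_max_left _ _
  intro n
  induction n with
  | zero => intro k; simpa using hmax1
  | succ n ih =>
    intro k
    rw [Finset.prod_range_succ']
    have hre : ∀ i : ℕ, k + ((i + 1 : ℕ) : ℤ) = (k + 1) + (i : ℤ) := fun i => by push_cast; ring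
    simp only [hre, Nat.cast_zero, add_zero]
    have hPpos : 0 < ∏ i ∈ Finset.range n, (if ξ ((k + 1) + (i : ℤ)) = 0 then df0 1 else df1 1) := by
      apply Finset.prod_pos
      intro i _
      split
      · exact hl0
      · exact hl1
    rcases fin2 (ξ k) with h | h
    · rw [h, if_pos rfl]
      have := mul_le_mul (ih (k + 1)) h1.deriv0_one.2.le hl0.le (le_trans zero_le_one hmax1)
      simpa using this
    · have hne : ξ k ≠ 0 := by rw [h]; decide
      rw [if_neg hne]
      have hz1 : z (k + 1) = f1 (z k) := by rw [(hz k).2.2, if_neg hne]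
      have hf1z : f1 (z k) ≤ f1 1 := h1.mono1.monotone (hz k).1.2
      have hBB := orbit_prod h1 h2 hz (k + 1) n
      have hup : 1 - z ((k + 1) + (n : ℤ)) ≤ 1 := by linarith [(hz ((k + 1) + (n : ℤ))).1.1]
      have hPle : (∏ i ∈ Finset.range n, (if ξ ((k + 1) + (i : ℤ)) = 0 then df0 1 else df1 1))
          ≤ 1 / (1 - f1 1) := by
        rw [le_div_iff₀ hu]
        have h1z : 1 - f1 1 ≤ 1 - z (k + 1) := by rw [hz1]; linarith
        nlinarith [hBB, hup, hPpos.le, h1z]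
      have hfin := mul_le_mul_of_nonneg_right hPle hl1.le
      refine le_trans hfin ?_
      rw [one_div_mul_eq_div]
      exact le_max_right _ _

private lemma sum_le (h1 : H1 f0 f1 df0 df1 d) (h2 : H2 df0 df1 d) {ξ : Seq2}
    (hξ : ξ ∈ SigmaA f0 f1 d) (k : ℤ) (n : ℕ) :
    ∑ i ∈ Finset.range n, (if ξ (k + (i : ℤ)) = 0 then Real.log (df0 1) else Real.log (df1 1))
      ≤ Real.log (max 1 (df1 1 / (1 - f1 1))) := by
  obtain ⟨p, hp, hp1⟩ := hξ
  have hp' : (ξ, p.2) ∈ Gamma f0 f1 d := by rw [← hp1]; exact hp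
  obtain ⟨z, hz⟩ := exists_orbit hp'
  have hl0 : (0 : ℝ) < df0 1 := h1.deriv0_one.1
  have hl1 : (0 : ℝ) < df1 1 := h1.deriv1_one
  have heq : ∀ i ∈ Finset.range n,
      (if ξ (k + (i : ℤ)) = 0 then Real.log (df0 1) else Real.log (df1 1))
        = Real.log (if ξ (k + (i : ℤ)) = 0 then df0 1 else df1 1) := by
    intro i _
    split <;> rfl
  have hne : ∀ i ∈ Finset.range n, (if ξ (k + (i : ℤ)) = 0 then df0 1 else df1 1) ≠ 0 := by
    intro i _
    split
    · exact hl0.ne'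
    · exact hl1.ne'
  have hpp : 0 < ∏ i ∈ Finset.range n, (if ξ (k + (i : ℤ)) = 0 then df0 1 else df1 1) := by
    apply Finset.prod_pos
    intro i _
    split
    · exact hl0
    · exact hl1
  rw [Finset.sum_congr rfl heq, ← Real.log_prod hne]
  exact Real.log_le_log hpp (prod_le h1 h2 hz n k)

private lemma shift_iterate (i : ℕ) : ∀ (ξ : Seq2) (n : ℤ), (shift^[i] ξ) n = ξ (n + (i : ℤ)) := by
  induction i with
  | zero => intro ξ n; simp
  | succ i ih =>
    intro ξ n
    rw [Function.iterate_succ_apply, ih (shift ξ) n]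
    show ξ (n + (i : ℤ) + 1) = ξ (n + ((i + 1 : ℕ) : ℤ))
    congr 1
    push_cast
    ring

private lemma measure_ineq (h1 : H1 f0 f1 df0 df1 d) (h2 : H2 df0 df1 d) (ν : Measure Seq2)
    (hν : IsInvSigma f0 f1 d ν) :
    (ν { ξ : Seq2 | ξ 0 = 0 }).toReal * Real.log (df0 1) +
      (ν { ξ : Seq2 | ξ 0 = 1 }).toReal * Real.log (df1 1) ≤ 0 := by
  obtain ⟨hprob, hSig, hmap⟩ := hν
  haveI := hprob
  set aa := Real.log (df0 1) with haa
  set bb := Real.log (df1 1) with hbb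
  set K := Real.log (max 1 (df1 1 / (1 - f1 1))) with hK
  have hA : MeasurableSet { ξ : Seq2 | ξ 0 = 0 } := by
    have hpre : { ξ : Seq2 | ξ 0 = 0 } = (fun ξ : Seq2 => ξ 0) ⁻¹' {0} := rfl
    rw [hpre]
    exact measurable_pi_apply (0 : ℤ) (measurableSet_singleton (0 : Fin 2))
  set A := { ξ : Seq2 | ξ 0 = 0 } with hAdef
  have hBA : { ξ : Seq2 | ξ 0 = 1 } = Aᶜ := by
    ext ξ
    simp only [Set.mem_setOf_eq, Set.mem_compl_iff, hAdef]
    rcases fin2 (ξ 0) with h | h <;> rw [h] <;> decide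
  set φ : Seq2 → ℝ := fun ξ => if ξ 0 = 0 then aa else bb with hφ
  have hφm : Measurable φ := Measurable.ite hA measurable_const measurable_const
  have hφrep : φ = fun ξ => A.indicator (fun _ => aa) ξ + Aᶜ.indicator (fun _ => bb) ξ := by
    funext ξ
    by_cases h : ξ 0 = 0
    · have hm : ξ ∈ A := h
      simp [hφ, Set.indicator_apply, Set.mem_compl_iff, hm, h]
    · have hm : ξ ∉ A := h
      simp [hφ, Set.indicator_apply, Set.mem_compl_iff, hm, h]
  have hint1 : Integrable (fun ξ => A.indicator (fun _ => aa) ξ) ν :=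
    (integrable_const aa).indicator hA
  have hint2 : Integrable (fun ξ => Aᶜ.indicator (fun _ => bb) ξ) ν :=
    (integrable_const bb).indicator hA.compl
  have hφi : Integrable φ ν := by rw [hφrep]; exact hint1.add hint2
  have hφint : ∫ ξ, φ ξ ∂ν = (ν A).toReal * aa + (ν Aᶜ).toReal * bb := by
    rw [hφrep, integral_add hint1 hint2, integral_indicator_const aa hA,
      integral_indicator_const bb hA.compl, smul_eq_mul, smul_eq_mul]
    rfl
  have hsm : Measurable shift := measurable_pi_lambda _ (fun n => measurable_pi_apply (n + 1))
  have hitm : ∀ i : ℕ, Measurable (shift^[i]) := fun i => hsm.iterate i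
  have hiter : ∀ i : ℕ, ν.map (shift^[i]) = ν := by
    intro i
    induction i with
    | zero => simp
    | succ i ih =>
      rw [Function.iterate_succ', ← Measure.map_map hsm (hitm i), ih, hmap]
  have hcompi : ∀ i : ℕ, Integrable (fun ξ => φ (shift^[i] ξ)) ν := by
    intro i
    have h0 : Integrable φ (ν.map (shift^[i])) := by rw [hiter i]; exact hφi
    exact (integrable_map_measure hφm.aestronglyMeasurable (hitm i).aemeasurable).mp h0
  have hcompint : ∀ i : ℕ, ∫ ξ, φ (shift^[i] ξ) ∂ν = ∫ ξ, φ ξ ∂ν := by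
    intro i
    rw [← integral_map (hitm i).aemeasurable hφm.aestronglyMeasurable, hiter i]
  have hmain : ∀ n : ℕ, (n : ℝ) * ∫ ξ, φ ξ ∂ν ≤ K := by
    intro n
    set g : Seq2 → ℝ := fun ξ => ∑ i ∈ Finset.range n, φ (shift^[i] ξ) with hg
    have hgm : Measurable g := Finset.measurable_sum _ (fun i _ => hφm.comp (hitm i))
    have hgi : Integrable g ν := integrable_finset_sum _ (fun i _ => hcompi i)
    have hgval : ∫ ξ, g ξ ∂ν = (n : ℝ) * ∫ ξ, φ ξ ∂ν := by
      rw [hg]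
      rw [integral_finset_sum _ (fun i _ => hcompi i)]
      simp only [hcompint]
      rw [Finset.sum_const, Finset.card_range, nsmul_eq_mul]
    have hbound : ∀ ξ ∈ SigmaA f0 f1 d, g ξ ≤ K := by
      intro ξ hξ
      have hs := sum_le h1 h2 hξ 0 n
      refine le_trans (le_of_eq ?_) hs
      refine Finset.sum_congr rfl fun i _ => ?_
      rw [hφ]
      simp only [shift_iterate]
      rfl
    have hE : MeasurableSet { ξ : Seq2 | g ξ ≤ K } := measurableSet_le hgm measurable_const
    have hE1 : ν { ξ : Seq2 | g ξ ≤ K } = 1 :=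
      le_antisymm prob_le_one (by rw [← hSig]; exact measure_mono (fun ξ hξ => hbound ξ hξ))
    have hae : ∀ᵐ ξ ∂ν, g ξ ≤ K := by
      rw [ae_iff]
      have hcompl : { ξ : Seq2 | ¬ g ξ ≤ K } = { ξ : Seq2 | g ξ ≤ K }ᶜ := by ext ξ; simp
      rw [hcompl, measure_compl hE (measure_ne_top ν _), hE1, measure_univ, tsub_self]
    calc (n : ℝ) * ∫ ξ, φ ξ ∂ν = ∫ ξ, g ξ ∂ν := hgval.symm
      _ ≤ ∫ _, K ∂ν := integral_mono_ae hgi (integrable_const K) hae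
      _ = K := by simp [measure_univ]
  have hfin : ∫ ξ, φ ξ ∂ν ≤ 0 := by
    by_contra hc
    push_neg at hc
    obtain ⟨n, hn⟩ := exists_nat_gt (K / ∫ ξ, φ ξ ∂ν)
    rw [div_lt_iff₀ hc] at hn
    have := hmain n
    linarith
  rw [hBA]
  rw [hφint] at hfin
  exact hfin

private def onesIdx (n : ℕ) (w : List (Fin 2)) : Finset (Fin n) :=
  Finset.filter (fun i : Fin n => w.getD i.1 0 = 1) Finset.univ

private lemma list_eq_of_getD {n : ℕ} {w w' : List (Fin 2)} (hw : w.length = n)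
    (hw' : w'.length = n) (h : ∀ i : ℕ, i < n → w.getD i 0 = w'.getD i 0) : w = w' := by
  apply List.ext_getElem (by omega)
  intro i h1 h2
  have hh := h i (by omega)
  rwa [List.getD_eq_getElem w 0 h1, List.getD_eq_getElem w' 0 h2] at hh

private lemma wordCount_le (S : Set Seq2) (n m : ℕ)
    (h : ∀ w : List (Fin 2), w.length = n → (∃ ξ ∈ S, OccursIn w ξ) → (onesIdx n w).card ≤ m) :
    wordCount S n ≤ ∑ j ∈ Finset.range (m + 1), n.choose j := by
  classical
  have hinj : Function.Injective
      (fun w : { w : List (Fin 2) // w.length = n ∧ ∃ ξ ∈ S, OccursIn w ξ } =>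
        (⟨onesIdx n w.1, h w.1 w.2.1 w.2.2⟩ : { s : Finset (Fin n) // s.card ≤ m })) := by
    rintro ⟨w, hw, hocc⟩ ⟨w', hw', hocc'⟩ hww
    simp only [Subtype.mk_eq_mk] at hww ⊢
    have hm := Finset.ext_iff.mp hww
    refine list_eq_of_getD hw hw' fun i hi => ?_
    have key := hm ⟨i, hi⟩
    simp only [onesIdx, Finset.mem_filter, Finset.mem_univ, true_and] at key
    rcases fin2 (w.getD i 0) with h0 | h0 <;> rcases fin2 (w'.getD i 0) with h0' | h0'
    · rw [h0, h0']
    · exact absurd (key.mpr h0') (by rw [h0]; decide)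
    · exact absurd (key.mp h0) (by rw [h0']; decide)
    · rw [h0, h0']
  calc wordCount S n ≤ Nat.card { s : Finset (Fin n) // s.card ≤ m } :=
        Nat.card_le_card_of_injective _ hinj
    _ = (Finset.filter (fun s : Finset (Fin n) => s.card ≤ m) Finset.univ).card := by
        rw [Nat.card_eq_fintype_card, Fintype.card_subtype]
    _ ≤ ((Finset.range (m + 1)).biUnion (fun j => Finset.powersetCard j
          (Finset.univ : Finset (Fin n)))).card := by
        apply Finset.card_le_card
        intro s hs
        simp only [Finset.mem_filter, Finset.mem_univ, true_and] at hs
        exact Finset.mem_biUnion.mpr ⟨s.card, Finset.mem_range.mpr (Nat.lt_succ_of_le hs),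
          Finset.mem_powersetCard.mpr ⟨Finset.subset_univ s, rfl⟩⟩
    _ ≤ ∑ j ∈ Finset.range (m + 1), (Finset.powersetCard j (Finset.univ : Finset (Fin n))).card :=
        Finset.card_biUnion_le
    _ = ∑ j ∈ Finset.range (m + 1), n.choose j := by
        refine Finset.sum_congr rfl fun j _ => ?_
        rw [Finset.card_powersetCard, Finset.card_univ, Fintype.card_fin]

private lemma ones_bound (h1 : H1 f0 f1 df0 df1 d) (h2 : H2 df0 df1 d) {n : ℕ}
    {w : List (Fin 2)} (hw : w.length = n) (hocc : ∃ ξ ∈ SigmaA f0 f1 d, OccursIn w ξ) :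
    Real.log (df0 1) * ((n : ℝ) - ((onesIdx n w).card : ℝ)) +
      Real.log (df1 1) * ((onesIdx n w).card : ℝ)
      ≤ Real.log (max 1 (df1 1 / (1 - f1 1))) := by
  obtain ⟨ξ, hξ, k, hk⟩ := hocc
  have hsum := sum_le h1 h2 hξ k n
  have he : ∀ i ∈ Finset.range n,
      (if ξ (k + (i : ℤ)) = 0 then Real.log (df0 1) else Real.log (df1 1))
        = (if w.getD i 0 = 0 then Real.log (df0 1) else Real.log (df1 1)) := by
    intro i hi
    rw [hk i (by rw [hw]; exact Finset.mem_range.mp hi)]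
  rw [Finset.sum_congr rfl he] at hsum
  have hfin : ∑ i ∈ Finset.range n,
      (if w.getD i 0 = 0 then Real.log (df0 1) else Real.log (df1 1))
      = Real.log (df0 1) * ((n : ℝ) - ((onesIdx n w).card : ℝ)) +
        Real.log (df1 1) * ((onesIdx n w).card : ℝ) := by
    rw [← Fin.sum_univ_eq_sum_range
      (fun i => if w.getD i 0 = 0 then Real.log (df0 1) else Real.log (df1 1)) n]
    rw [← Finset.sum_filter_add_sum_filter_not Finset.univ (fun i : Fin n => w.getD i.1 0 = 1)]
    have hA : ∀ i ∈ Finset.filter (fun i : Fin n => w.getD i.1 0 = 1) Finset.univ,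
        (if w.getD i.1 0 = 0 then Real.log (df0 1) else Real.log (df1 1)) = Real.log (df1 1) := by
      intro i hi
      have h := (Finset.mem_filter.mp hi).2
      rw [h, if_neg (by decide)]
    have hB : ∀ i ∈ Finset.filter (fun i : Fin n => ¬ w.getD i.1 0 = 1) Finset.univ,
        (if w.getD i.1 0 = 0 then Real.log (df0 1) else Real.log (df1 1)) = Real.log (df0 1) := by
      intro i hi
      have h := (Finset.mem_filter.mp hi).2
      rcases fin2 (w.getD i.1 0) with h0 | h0
      · rw [h0, if_pos rfl]
      · exact absurd h0 h
    rw [Finset.sum_congr rfl hA, Finset.sum_congr rfl hB, Finset.sum_const, Finset.sum_const]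
    have hcard := Finset.card_filter_add_card_filter_not
      (s := (Finset.univ : Finset (Fin n))) (p := fun i : Fin n => w.getD i.1 0 = 1)
    have hcard2 : (onesIdx n w).card +
        (Finset.filter (fun i : Fin n => ¬ w.getD i.1 0 = 1) Finset.univ).card = n := by
      simpa [onesIdx] using hcard
    have hle : (onesIdx n w).card ≤ n := by omega
    have hneg : (Finset.filter (fun i : Fin n => ¬ w.getD i.1 0 = 1) Finset.univ).card
        = n - (onesIdx n w).card := by omega
    rw [hneg, nsmul_eq_mul, nsmul_eq_mul, Nat.cast_sub hle]
    show ((onesIdx n w).card : ℝ) * Real.log (df1 1) +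
      ((n : ℝ) - ((onesIdx n w).card : ℝ)) * Real.log (df0 1) = _
    ring
  rw [hfin] at hsum
  exact hsum

private lemma choose_le_exp (n j : ℕ) (hj : j ≤ n) {p : ℝ} (hp0 : 0 < p) (hp1 : p < 1) :
    (n.choose j : ℝ) ≤
      Real.exp ((j : ℝ) * (Real.log (1 - p) - Real.log p) - (n : ℝ) * Real.log (1 - p)) := by
  have h1p : 0 < 1 - p := by linarith
  have hsum : (1 : ℝ) = ∑ k ∈ Finset.range (n + 1), p ^ k * (1 - p) ^ (n - k) * (n.choose k : ℝ) := by
    have h := add_pow p (1 - p) n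
    rw [show p + (1 - p) = (1 : ℝ) by ring, one_pow] at h
    exact h
  have hle : p ^ j * (1 - p) ^ (n - j) * (n.choose j : ℝ) ≤ 1 := by
    have hs := Finset.single_le_sum (f := fun k => p ^ k * (1 - p) ^ (n - k) * (n.choose k : ℝ))
      (fun k _ => by positivity) (Finset.mem_range.mpr (Nat.lt_succ_of_le hj))
    rw [← hsum] at hs
    exact hs
  have hpos : 0 < p ^ j * (1 - p) ^ (n - j) := by positivity
  have h2 : (n.choose j : ℝ) ≤ 1 / (p ^ j * (1 - p) ^ (n - j)) := by
    rw [le_div_iff₀ hpos]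
    nlinarith [hle]
  have e1 : p ^ j = Real.exp ((j : ℝ) * Real.log p) := by
    rw [Real.exp_nat_mul, Real.exp_log hp0]
  have e2 : (1 - p) ^ (n - j) = Real.exp (((n - j : ℕ) : ℝ) * Real.log (1 - p)) := by
    rw [Real.exp_nat_mul, Real.exp_log h1p]
  have key : 1 / (p ^ j * (1 - p) ^ (n - j))
      = Real.exp ((j : ℝ) * (Real.log (1 - p) - Real.log p) - (n : ℝ) * Real.log (1 - p)) := by
    rw [e1, e2, ← Real.exp_add, one_div, ← Real.exp_neg]
    congr 1
    rw [Nat.cast_sub hj]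
    ring
  rw [key] at h2
  exact h2

private lemma log_nat_nonneg (k : ℕ) : 0 ≤ Real.log k := by
  rcases Nat.eq_zero_or_pos k with h | h
  · simp [h]
  · exact Real.log_nonneg (by exact_mod_cast h)

end Aux

/-! ## Statement 19 -/

theorem statement_19 (f0 f1 df0 df1 : ℝ → ℝ) (d : ℝ) (hH1 : H1 f0 f1 df0 df1 d)
    (hH2 : H2 df0 df1 d) :
    (∀ ν : Measure Seq2, IsErgSigma f0 f1 d ν →
      (ν { ξ : Seq2 | ξ 0 = 0 }).toReal * Real.log (df0 1) +
        (ν { ξ : Seq2 | ξ 0 = 1 }).toReal * Real.log (df1 1) ≤ 0) ∧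
    (1 < df1 1 →
      (∀ ν : Measure Seq2, IsInvSigma f0 f1 d ν →
        (ν { ξ : Seq2 | ξ 0 = 1 }).toReal ≤
          (|Real.log (df0 1)| / Real.log (df1 1)) * (ν { ξ : Seq2 | ξ 0 = 0 }).toReal) ∧
      subshiftEntropy (SigmaA f0 f1 d) ≤
        entH (min (1 / 2)
          ((|Real.log (df0 1)| / Real.log (df1 1)) /
            (1 + |Real.log (df0 1)| / Real.log (df1 1))))) := by
  have haneg : Real.log (df0 1) < 0 := Real.log_neg hH1.deriv0_one.1 hH1.deriv0_one.2
  constructor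
  · intro ν hν
    exact measure_ineq hH1 hH2 ν hν.1
  · intro hb1
    have hbpos : 0 < Real.log (df1 1) := Real.log_pos hb1
    constructor
    · intro ν hν
      have h := measure_ineq hH1 hH2 ν hν
      rw [abs_of_neg haneg, div_mul_eq_mul_div, le_div_iff₀ hbpos]
      nlinarith [h]
    · -- entropy bound
      set S := SigmaA f0 f1 d with hS
      set aa := Real.log (df0 1) with haa
      set bb := Real.log (df1 1) with hbbd
      have hba : 0 < bb - aa := by linarith
      set K := Real.log (max 1 (df1 1 / (1 - f1 1))) with hKdef
      have hK0 : 0 ≤ K := Real.log_nonneg (le_max_left _ _)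
      set q := (-aa) / (bb - aa) with hqdef
      have hq0 : 0 < q := div_pos (by linarith) hba
      have hq1 : q < 1 := by rw [hqdef, div_lt_one hba]; linarith
      set K2 := K / (bb - aa) with hK2def
      have hK20 : 0 ≤ K2 := div_nonneg hK0 hba.le
      have hCq : |aa| / bb / (1 + |aa| / bb) = q := by
        rw [abs_of_neg haneg, hqdef]
        have hd : 0 < 1 + -aa / bb := by
          have : (0:ℝ) < (-aa) / bb := div_pos (by linarith) hbpos
          linarith
        rw [div_eq_div_iff hd.ne' hba.ne']
        field_simp
        ring
      rw [hCq]
      -- word counting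
      have hones : ∀ (n : ℕ) (w : List (Fin 2)), w.length = n → (∃ ξ ∈ S, OccursIn w ξ) →
          (onesIdx n w).card ≤ Nat.floor (q * n + K2) := by
        intro n w hw hocc
        have h := ones_bound hH1 hH2 hw hocc
        rw [← haa, ← hbbd, ← hKdef] at h
        have ht : ((onesIdx n w).card : ℝ) ≤ (n : ℝ) := by
          have h1 : (onesIdx n w).card ≤ n := by
            refine le_trans (Finset.card_filter_le _ _) ?_
            simp
          exact_mod_cast h1
        apply Nat.le_floor
        rw [hqdef, hK2def, div_mul_eq_mul_div, ← add_div, le_div_iff₀ hba]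
        nlinarith [h]
      have hwcount : ∀ n : ℕ, wordCount S n
          ≤ ∑ j ∈ Finset.range (Nat.floor (q * n + K2) + 1), n.choose j :=
        fun n => wordCount_le S n _ (fun w hw hocc => hones n w hw hocc)
      have hf0 : ∀ n : ℕ, 0 ≤ Real.log (wordCount S n) / (n : ℝ) :=
        fun n => div_nonneg (log_nat_nonneg _) (Nat.cast_nonneg n)
      have hcb : Filter.IsCoboundedUnder (· ≤ ·) Filter.atTop
          (fun n : ℕ => Real.log (wordCount S n) / (n : ℝ)) :=
        Filter.isCoboundedUnder_le_of_le Filter.atTop hf0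
      unfold subshiftEntropy
      rcases le_or_gt (1/2 : ℝ) q with h12 | h12
      · -- trivial bound by log 2
        rw [min_eq_left h12]
        have hent : entH (1/2 : ℝ) = Real.log 2 := by
          unfold entH
          rw [show (1:ℝ) - 1/2 = 1/2 by norm_num, one_div, Real.log_inv]
          ring
        rw [hent]
        have hwc2 : ∀ n : ℕ, wordCount S n ≤ 2 ^ n := by
          intro n
          have hinj : Function.Injective
              (fun (w : { w : List (Fin 2) // w.length = n ∧ ∃ ξ ∈ S, OccursIn w ξ })
                (i : Fin n) => w.1.getD i.1 0) := by
            intro w w' hfun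
            refine Subtype.ext ?_
            refine list_eq_of_getD w.2.1 w'.2.1 fun i hi => ?_
            exact congrFun hfun ⟨i, hi⟩
          calc wordCount S n ≤ Nat.card (Fin n → Fin 2) :=
                Nat.card_le_card_of_injective _ hinj
            _ = 2 ^ n := by
                rw [Nat.card_eq_fintype_card]
                simp
        apply Filter.limsup_le_of_le hcb
        filter_upwards [Filter.eventually_ge_atTop 1] with n hn
        have hnR : (0:ℝ) < n := by exact_mod_cast hn
        have hlog : Real.log (wordCount S n) ≤ (n : ℝ) * Real.log 2 := by
          rcases Nat.eq_zero_or_pos (wordCount S n) with h | h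
          · rw [h]
            simp only [Nat.cast_zero, Real.log_zero]
            positivity
          · have hcast : ((wordCount S n : ℕ) : ℝ) ≤ ((2:ℝ)) ^ n := by
              exact_mod_cast hwc2 n
            calc Real.log (wordCount S n) ≤ Real.log ((2:ℝ) ^ n) :=
                  Real.log_le_log (by exact_mod_cast h) hcast
              _ = (n : ℝ) * Real.log 2 := by rw [Real.log_pow]
        rw [div_le_iff₀ hnR]
        linarith
      · -- nontrivial bound via binomial estimates
        rw [min_eq_right h12.le]
        have h1q : 0 < 1 - q := by linarith
        have hq12 : q < 1 - q := by linarith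
        set L := Real.log (1 - q) - Real.log q with hLdef
        have hL0 : 0 ≤ L := by
          have := Real.log_le_log hq0 hq12.le
          rw [hLdef]; linarith
        set K3 := K2 * L with hK3def
        have hK30 : 0 ≤ K3 := mul_nonneg hK20 hL0
        have hentq : q * L - Real.log (1 - q) = entH q := by
          unfold entH
          rw [hLdef]
          ring
        have hent0 : 0 ≤ entH q := by
          unfold entH
          have hl1 : Real.log q < 0 := Real.log_neg hq0 hq1
          have hl2 : Real.log (1 - q) < 0 := Real.log_neg h1q (by linarith)
          nlinarith
        have hchain : ∀ n : ℕ, 1 ≤ n → Real.log (wordCount S n) / (n : ℝ)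
            ≤ entH q + (Real.log ((n : ℝ) + K2 + 1) + K3) / n := by
          intro n hn
          have hnR : (0:ℝ) < n := by exact_mod_cast hn
          set m := Nat.floor (q * n + K2) with hmdef
          have hmle : (m : ℝ) ≤ q * n + K2 := Nat.floor_le (by positivity)
          have hterm : ∀ j ∈ Finset.range (m + 1),
              (n.choose j : ℝ) ≤ Real.exp ((n : ℝ) * entH q + K3) := by
            intro j hj
            have hjm : (j : ℝ) ≤ (m : ℝ) := by
              exact_mod_cast Nat.lt_succ_iff.mp (Finset.mem_range.mp hj)
            rcases le_or_gt j n with hjn | hjn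
            · refine le_trans (choose_le_exp n j hjn hq0 hq1) ?_
              rw [Real.exp_le_exp]
              have hL' : (j : ℝ) * L ≤ (q * n + K2) * L :=
                mul_le_mul_of_nonneg_right (le_trans hjm hmle) hL0
              have he2 : (n : ℝ) * entH q + K3 = (q * n + K2) * L - (n : ℝ) * Real.log (1 - q) := by
                rw [← hentq, hK3def]
                ring
              rw [he2, ← hLdef]
              linarith
            · rw [Nat.choose_eq_zero_of_lt hjn]
              simp only [Nat.cast_zero]
              positivity
          have hsum2 : ((∑ j ∈ Finset.range (m + 1), n.choose j : ℕ) : ℝ)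
              ≤ ((m : ℝ) + 1) * Real.exp ((n : ℝ) * entH q + K3) := by
            rw [Nat.cast_sum]
            calc ∑ j ∈ Finset.range (m + 1), (n.choose j : ℝ)
                ≤ (Finset.range (m + 1)).card • Real.exp ((n : ℝ) * entH q + K3) :=
                  Finset.sum_le_card_nsmul _ _ _ hterm
              _ = ((m : ℝ) + 1) * Real.exp ((n : ℝ) * entH q + K3) := by
                  rw [Finset.card_range, nsmul_eq_mul]
                  push_cast
                  ring
          have hwcR : ((wordCount S n : ℕ) : ℝ)
              ≤ ((n : ℝ) + K2 + 1) * Real.exp ((n : ℝ) * entH q + K3) := by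
            refine le_trans ?_ (le_trans hsum2 ?_)
            · exact_mod_cast hwcount n
            · have hm1 : (m : ℝ) + 1 ≤ (n : ℝ) + K2 + 1 := by
                nlinarith [hmle, hq1, Nat.cast_nonneg (α := ℝ) n]
              exact mul_le_mul_of_nonneg_right hm1 (Real.exp_pos _).le
          have hpos1 : (0:ℝ) < (n : ℝ) + K2 + 1 := by linarith
          have hlogwc : Real.log (wordCount S n)
              ≤ Real.log ((n : ℝ) + K2 + 1) + ((n : ℝ) * entH q + K3) := by
            rcases Nat.eq_zero_or_pos (wordCount S n) with h | h
            · rw [h]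
              simp only [Nat.cast_zero, Real.log_zero]
              have hln : 0 ≤ Real.log ((n : ℝ) + K2 + 1) := Real.log_nonneg (by linarith)
              have hne : 0 ≤ (n : ℝ) * entH q := by positivity
              linarith
            · calc Real.log (wordCount S n)
                  ≤ Real.log (((n : ℝ) + K2 + 1) * Real.exp ((n : ℝ) * entH q + K3)) :=
                    Real.log_le_log (by exact_mod_cast h) hwcR
                _ = Real.log ((n : ℝ) + K2 + 1) + ((n : ℝ) * entH q + K3) := by
                    rw [Real.log_mul hpos1.ne' (Real.exp_ne_zero _), Real.log_exp]
          rw [div_le_iff₀ hnR, add_mul, div_mul_cancel₀ _ hnR.ne']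
          linarith
        have hu1 : Tendsto (fun n : ℕ => (n : ℝ) + K2 + 1) atTop atTop := by
          apply tendsto_atTop_add_const_right
          apply tendsto_atTop_add_const_right
          exact tendsto_natCast_atTop_atTop
        have h2t : Tendsto (fun n : ℕ => Real.log ((n : ℝ) + K2 + 1) / ((n : ℝ) + K2 + 1))
            atTop (nhds 0) := by
          have := (Real.isLittleO_log_id_atTop.tendsto_div_nhds_zero).comp hu1
          exact this
        have h3t : Tendsto (fun n : ℕ => ((n : ℝ) + K2 + 1) / n) atTop (nhds 1) := by
          have hbase : Tendsto (fun n : ℕ => 1 + (K2 + 1) / (n : ℝ)) atTop (nhds (1 + 0)) :=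
            tendsto_const_nhds.add (tendsto_const_div_atTop_nhds_zero_nat (K2 + 1))
          rw [add_zero] at hbase
          refine hbase.congr' ?_
          filter_upwards [Filter.eventually_ge_atTop 1] with n hn
          have hnR : (0:ℝ) < n := by exact_mod_cast hn
          field_simp
          ring
        have h4t : Tendsto (fun n : ℕ => Real.log ((n : ℝ) + K2 + 1) / n) atTop (nhds 0) := by
          have hmul := h2t.mul h3t
          rw [zero_mul] at hmul
          refine hmul.congr' ?_
          filter_upwards [Filter.eventually_ge_atTop 1] with n hn
          have hnR : (0:ℝ) < n := by exact_mod_cast hn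
          have hupos : (0:ℝ) < (n : ℝ) + K2 + 1 := by linarith
          field_simp
        have h5t : Tendsto (fun n : ℕ => (Real.log ((n : ℝ) + K2 + 1) + K3) / n)
            atTop (nhds 0) := by
          have := h4t.add (tendsto_const_div_atTop_nhds_zero_nat K3)
          rw [add_zero] at this
          refine this.congr fun n => ?_
          rw [add_div]
        have hub : ∀ ε : ℝ, 0 < ε →
            Filter.limsup (fun n : ℕ => Real.log (wordCount S n) / (n : ℝ)) Filter.atTop
              ≤ entH q + ε := by
          intro ε hε
          apply Filter.limsup_le_of_le hcb
          filter_upwards [h5t.eventually_le_const hε, Filter.eventually_ge_atTop 1] with n h1n h2n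
          linarith [hchain n h2n]
        by_contra hcon
        push_neg at hcon
        have hh := hub ((Filter.limsup (fun n : ℕ => Real.log (wordCount S n) / (n : ℝ))
          Filter.atTop - entH q) / 2) (by linarith)
        linarith

end DGR
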